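/- Let m, p, n be positive integers with p | m, and let A(m,p,n) be the set of exponent tuples (a_1,...,a_n) such that there exists j with 0 ≤ a_i < i·m for i < j, 0 ≤ a_j < m/p, and m/p ≤ a_i < m/p + (i−1)·m for i > j. Then the generating function ∑_{(a_1,...,a_n) ∈ A(m,p,n)} q^{a_1+⋯+a_n} equals [m]_q · [2m]_q ⋯ [(n−1)m]_q · [nm/p]_q, where [k]_q = 1 + q + ⋯ + q^{k-1}. -/

import Mathlib

open Finset Polynomial

/-- Membership in the Artin basis index set `A(m,p,n)` of `G(m,p,n)` (0-indexed version of the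
1-indexed description: `a_i < i·m` for `i < j`, `a_j < m/p`, `m/p ≤ a_i < m/p + (i-1)·m`
for `i > j`). -/
def ArtinMem (m p n : ℕ) (a : Fin n → ℕ) : Prop :=
  ∃ j : Fin n,
    (∀ i : Fin n, i < j → a i < (i.1 + 1) * m) ∧
    a j < m / p ∧
    (∀ i : Fin n, j < i → m / p ≤ a i ∧ a i < m / p + i.1 * m)

open Classical in
/-- The Artin basis index set as a finite set of exponent tuples. -/
noncomputable def ArtinSet (m p n : ℕ) : Finset (Fin n → ℕ) :=
  (Fintype.piFinset fun i : Fin n => Finset.range ((i.1 + 1) * m)).filter (ArtinMem m p n)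

/-- The `q`-integer `[k]_q = 1 + q + ⋯ + q^{k-1}`. -/
noncomputable def qint (k : ℕ) : Polynomial ℤ := ∑ i ∈ Finset.range k, X ^ i

/-- The slice of the Artin set with pivot `j`, as a product set. -/
noncomputable def Tslice (m d n : ℕ) (j : Fin n) : Finset (Fin n → ℕ) :=
  Fintype.piFinset fun i : Fin n =>
    if i < j then Finset.range ((i.1 + 1) * m)
    else if i = j then Finset.range d
    else Finset.Ico d (d + i.1 * m)

lemma qint_nat_mul (d n : ℕ) :
    qint (n * d) = (∑ j ∈ Finset.range n, (X : Polynomial ℤ) ^ (j * d)) * qint d := by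
  induction n with
  | zero => simp [qint]
  | succ n ih =>
    rw [Nat.succ_mul, qint, Finset.sum_range_add, ← qint, ih, Finset.sum_range_succ,
      add_mul]
    congr 1
    rw [qint, Finset.mul_sum]
    exact Finset.sum_congr rfl fun x _ => (pow_add _ _ _)

lemma ico_sum (d k : ℕ) :
    ∑ i ∈ Finset.Ico d (d + k), (X : Polynomial ℤ) ^ i = X ^ d * qint k := by
  rw [qint, Finset.mul_sum, Finset.sum_Ico_eq_sum_range]
  simp [pow_add]

lemma artinSet_eq_biUnion (m p n : ℕ) (hm : 1 ≤ m) (hp : 1 ≤ p) (hpm : p ∣ m) :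
    ArtinSet m p n = Finset.univ.biUnion (Tslice m (m / p) n) := by
  classical
  have hdm : m / p ≤ m := Nat.div_le_self m p
  ext a
  simp only [ArtinSet, Finset.mem_filter, Fintype.mem_piFinset, Finset.mem_range,
    Finset.mem_biUnion, Finset.mem_univ, true_and, Tslice, ArtinMem]
  constructor
  · rintro ⟨hb, j, h1, h2, h3⟩
    refine ⟨j, fun i => ?_⟩
    rcases lt_trichotomy i j with h | h | h
    · rw [if_pos h]; exact Finset.mem_range.mpr (h1 i h)
    · subst h; rw [if_neg (lt_irrefl _), if_pos rfl]; exact Finset.mem_range.mpr h2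
    · rw [if_neg (not_lt.mpr h.le), if_neg (ne_of_gt h)]
      exact Finset.mem_Ico.mpr (h3 i h)
  · rintro ⟨j, hj⟩
    have hji : ∀ i : Fin n, j < i → m / p ≤ a i ∧ a i < m / p + i.1 * m := by
      intro i hi
      have h := hj i
      rw [if_neg (not_lt.mpr hi.le), if_neg (ne_of_gt hi)] at h
      exact Finset.mem_Ico.mp h
    have hjj : a j < m / p := by
      have h := hj j
      rw [if_neg (lt_irrefl _), if_pos rfl] at h
      exact Finset.mem_range.mp h
    have hlt : ∀ i : Fin n, i < j → a i < (i.1 + 1) * m := by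
      intro i hi
      have h := hj i
      rw [if_pos hi] at h
      exact Finset.mem_range.mp h
    refine ⟨fun i => ?_, j, hlt, hjj, hji⟩
    rcases lt_trichotomy i j with h | h | h
    · exact hlt i h
    · subst h
      calc a i < m / p := hjj
        _ ≤ m := hdm
        _ ≤ (i.1 + 1) * m := Nat.le_mul_of_pos_left m (Nat.succ_pos _)
    · calc a i < m / p + i.1 * m := (hji i h).2
        _ ≤ m + i.1 * m := by omega
        _ = (i.1 + 1) * m := by ring

lemma tslice_disjoint (m d n : ℕ) (hd : 1 ≤ d) :
    ((Finset.univ : Finset (Fin n)) : Set (Fin n)).PairwiseDisjoint (Tslice m d n) := by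
  classical
  have key : ∀ x y : Fin n, x < y → Disjoint (Tslice m d n x) (Tslice m d n y) := by
    intro x y hxy
    rw [Finset.disjoint_left]
    intro a hax hay
    have h1 := Fintype.mem_piFinset.mp hax y
    have h2 := Fintype.mem_piFinset.mp hay y
    rw [if_neg (not_lt.mpr hxy.le), if_neg (ne_of_gt hxy)] at h1
    rw [if_neg (lt_irrefl _), if_pos rfl] at h2
    exact absurd (Finset.mem_range.mp h2) (not_lt.mpr (Finset.mem_Ico.mp h1).1)
  intro x _ y _ hxy
  rcases lt_or_gt_of_ne hxy with h | h
  · exact key x y h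
  · exact (key y x h).symm

lemma tslice_sum (m d n : ℕ) (j : Fin n) :
    ∑ a ∈ Tslice m d n j, (X : Polynomial ℤ) ^ (∑ i, a i) =
      qint d * X ^ ((n - 1 - j.1) * d) *
        ∏ k ∈ Finset.range (n - 1), qint ((k + 1) * m) := by
  classical
  have h1 : ∑ a ∈ Tslice m d n j, (X : Polynomial ℤ) ^ (∑ i, a i)
      = ∏ i : Fin n, ∑ k ∈ (if i < j then Finset.range ((i.1 + 1) * m)
          else if i = j then Finset.range d else Finset.Ico d (d + i.1 * m)),
          (X : Polynomial ℤ) ^ k := by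
    rw [Tslice, Finset.prod_univ_sum]
    exact Finset.sum_congr rfl fun a _ => (Finset.prod_pow_eq_pow_sum _ _ _).symm
  rw [h1]
  set F : ℕ → Polynomial ℤ := fun i =>
    if i < j.1 then qint ((i + 1) * m) else if i = j.1 then qint d else X ^ d * qint (i * m)
    with hF
  have h2 : ∀ i : Fin n, (∑ k ∈ (if i < j then Finset.range ((i.1 + 1) * m)
      else if i = j then Finset.range d else Finset.Ico d (d + i.1 * m)),
      (X : Polynomial ℤ) ^ k) = F i.1 := by
    intro i
    rcases lt_trichotomy i j with h | h | h
    · rw [if_pos h, hF]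
      simp only
      rw [if_pos (Fin.lt_def.mp h)]
      rfl
    · subst h
      simp [hF, qint]
    · have hne : i ≠ j := ne_of_gt h
      rw [if_neg (not_lt.mpr h.le), if_neg hne, ico_sum, hF]
      simp only
      rw [if_neg (not_lt.mpr (Fin.le_def.mp h.le)), if_neg (fun hh => hne (Fin.ext hh))]
  rw [Finset.prod_congr rfl fun i _ => h2 i, Fin.prod_univ_eq_prod_range F n]
  have hjn : j.1 < n := j.2
  set t := n - 1 - j.1 with ht
  have hn' : n = (j.1 + 1) + t := by omega
  rw [show Finset.range n = Finset.range ((j.1 + 1) + t) from by rw [← hn'],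
    Finset.prod_range_add, Finset.prod_range_succ]
  have e1 : ∀ i ∈ Finset.range j.1, F i = qint ((i + 1) * m) := by
    intro i hi
    rw [hF]
    simp only
    rw [if_pos (Finset.mem_range.mp hi)]
  have e2 : F j.1 = qint d := by simp [hF]
  have e3 : ∀ i ∈ Finset.range t, F (j.1 + 1 + i) = X ^ d * qint ((j.1 + 1 + i) * m) := by
    intro i _
    rw [hF]
    simp only
    rw [if_neg (by omega), if_neg (by omega)]
  rw [Finset.prod_congr rfl e1, e2, Finset.prod_congr rfl e3, Finset.prod_mul_distrib,
    Finset.prod_const]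
  have hnm1 : n - 1 = j.1 + t := by omega
  rw [show Finset.range (n - 1) = Finset.range (j.1 + t) from by rw [hnm1],
    Finset.prod_range_add]
  have e4 : ∀ i ∈ Finset.range t, qint ((j.1 + i + 1) * m) = qint ((j.1 + 1 + i) * m) := by
    intro i _
    congr 1
    ring
  rw [Finset.prod_congr rfl e4, ← pow_mul, Finset.card_range, mul_comm d t]
  ring

/-- Hilbert series of the Artin basis:
`∑_{a ∈ A(m,p,n)} q^{a_1+⋯+a_n} = [m]_q [2m]_q ⋯ [(n-1)m]_q [nm/p]_q`. -/
theorem artinSet_hilbert_series (m p n : ℕ) (hm : 1 ≤ m) (hp : 1 ≤ p) (hn : 1 ≤ n)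
    (hpm : p ∣ m) :
    ∑ a ∈ ArtinSet m p n, (X : Polynomial ℤ) ^ (∑ i, a i) =
      (∏ i ∈ Finset.range (n - 1), qint ((i + 1) * m)) * qint (n * m / p) := by
  set d := m / p with hd
  obtain ⟨c, hc⟩ := hpm
  have hdc : d = c := by rw [hd, hc, Nat.mul_div_cancel_left _ hp]
  have hc0 : c ≠ 0 := by rintro rfl; omega
  have hd1 : 1 ≤ d := hdc ▸ Nat.pos_of_ne_zero hc0
  have hnd : n * m / p = n * d := by
    rw [hc, hdc, ← mul_assoc, mul_comm n p, mul_assoc, Nat.mul_div_cancel_left _ hp]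
  rw [hnd, artinSet_eq_biUnion m p n hm hp ⟨c, hc⟩,
    Finset.sum_biUnion (tslice_disjoint m d n hd1)]
  calc ∑ j : Fin n, ∑ a ∈ Tslice m d n j, (X : Polynomial ℤ) ^ (∑ i, a i)
      = ∑ j : Fin n, qint d * X ^ ((n - 1 - j.1) * d) *
          ∏ k ∈ Finset.range (n - 1), qint ((k + 1) * m) := by
        exact Finset.sum_congr rfl fun j _ => tslice_sum m d n j
    _ = (∏ i ∈ Finset.range (n - 1), qint ((i + 1) * m)) * qint (n * d) := by
        rw [← Finset.sum_mul, ← Finset.mul_sum,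
          Fin.sum_univ_eq_sum_range (fun j => (X : Polynomial ℤ) ^ ((n - 1 - j) * d)) n,
          Finset.sum_range_reflect (fun j => (X : Polynomial ℤ) ^ (j * d)) n,
          qint_nat_mul]
        ring
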